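/- Suppose ρ is irreducible and σ : V → V is a conjugate-linear G-equivariant bijection with σ∘σ = −id_V. Define Σ : V × V → V × V by Σ(x, y) = (σ(y), −σ(x)), where G acts diagonally on V × V by ρ ⊕ ρ. Then Σ is conjugate-linear, G-equivariant, and satisfies Σ∘Σ = id; the real subspace W = {v ∈ V × V : Σ(v) = v} is invariant under the G-action, satisfies V × V = W ⊕ iW as real vector spaces, and W is irreducible as a real representation of G, i.e. the only G-invariant real subspaces of W are 0 and W. -/

import Mathlib

open Complex

/-- The map `Σ(x, y) = (σ y, -σ x)` on `V × V`. -/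
def quaternionicDouble {V : Type*} [AddCommGroup V] (σ : V → V) : V × V → V × V :=
  fun p => (σ p.2, -σ p.1)

section Aux

variable {G V : Type*} [Group G] [AddCommGroup V] [Module ℂ V]
    [FiniteDimensional ℂ V] [Nontrivial V]
    (ρ : G →* (V ≃ₗ[ℂ] V))

/-- Schur's lemma for our hand-rolled setting. -/
lemma qd_schur
    (hirr : ∀ p : Submodule ℂ V, (∀ g : G, ∀ x ∈ p, ρ g x ∈ p) → p = ⊥ ∨ p = ⊤)
    (f : V →ₗ[ℂ] V) (hf : ∀ (g : G) (v : V), f (ρ g v) = ρ g (f v)) :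
    ∃ c : ℂ, ∀ v, f v = c • v := by
  obtain ⟨c, hc⟩ := Module.End.exists_eigenvalue f
  refine ⟨c, ?_⟩
  have hp : ∀ g : G, ∀ x ∈ Module.End.eigenspace f c, ρ g x ∈ Module.End.eigenspace f c := by
    intro g x hx
    rw [Module.End.mem_eigenspace_iff] at hx ⊢
    rw [hf, hx, map_smul]
  rcases hirr _ hp with h | h
  · exact absurd h (Module.End.hasEigenvalue_iff.mp hc)
  · intro v
    have hv : v ∈ Module.End.eigenspace f c := h ▸ Submodule.mem_top
    exact Module.End.mem_eigenspace_iff.mp hv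

/-- An irreducible complex rep carrying a conjugate-linear equivariant `σ` with
`σ² = -1` cannot also carry a conjugate-linear equivariant involution `τ`. -/
lemma qd_no_real_structure
    (hirr : ∀ p : Submodule ℂ V, (∀ g : G, ∀ x ∈ p, ρ g x ∈ p) → p = ⊥ ∨ p = ⊤)
    (σ : V → V)
    (hadd : ∀ a b : V, σ (a + b) = σ a + σ b)
    (hsmul : ∀ (c : ℂ) (v : V), σ (c • v) = (starRingEnd ℂ) c • σ v)
    (hequiv : ∀ (g : G) (v : V), σ (ρ g v) = ρ g (σ v))
    (hsq : ∀ v : V, σ (σ v) = -v)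
    (τ : V → V)
    (htadd : ∀ a b : V, τ (a + b) = τ a + τ b)
    (htsmul : ∀ (c : ℂ) (v : V), τ (c • v) = (starRingEnd ℂ) c • τ v)
    (htequiv : ∀ (g : G) (v : V), τ (ρ g v) = ρ g (τ v))
    (htsq : ∀ v : V, τ (τ v) = v) : False := by
  set A : V →ₗ[ℂ] V :=
    { toFun := fun v => σ (τ v)
      map_add' := fun a b => by show σ (τ (a+b)) = _; rw [htadd, hadd]
      map_smul' := fun c v => by
        show σ (τ (c • v)) = _
        simp only [RingHom.id_apply]
        rw [htsmul, hsmul, Complex.conj_conj] } with hA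
  have hAeq : ∀ (g : G) (v : V), A (ρ g v) = ρ g (A v) := by
    intro g v
    show σ (τ (ρ g v)) = ρ g (σ (τ v))
    rw [htequiv, hequiv]
  obtain ⟨c, hc⟩ := qd_schur ρ hirr A hAeq
  have hc' : ∀ v, σ (τ v) = c • v := hc
  obtain ⟨w, hw⟩ := exists_ne (0 : V)
  have h1 : σ w = c • τ w := by have := hc' (τ w); rwa [htsq] at this
  have h2 : σ (σ w) = ((starRingEnd ℂ) c * c) • w := by
    rw [h1, hsmul, hc', smul_smul]
  rw [hsq] at h2
  have h3 : ((starRingEnd ℂ) c * c + 1) • w = 0 := by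
    rw [add_smul, one_smul, ← h2, neg_add_cancel]
  have h4 : (starRingEnd ℂ) c * c + 1 = 0 := by
    rcases smul_eq_zero.mp h3 with h | h
    · exact h
    · exact absurd h hw
  have h5 := congrArg Complex.re h4
  have h6 : (starRingEnd ℂ) c * c = (Complex.normSq c : ℂ) := by
    rw [Complex.normSq_eq_conj_mul_self]
  rw [h6] at h5
  simp only [Complex.add_re, Complex.ofReal_re, Complex.one_re, Complex.zero_re] at h5
  nlinarith [Complex.normSq_nonneg c]

end Aux

/-- If `ρ` is irreducible and `σ` is a conjugate-linear `G`-equivariant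
bijection with `σ ∘ σ = -id`, then `Σ(x,y) = (σ y, -σ x)` on `V × V` (with the diagonal
`G`-action `ρ ⊕ ρ`) is conjugate-linear, `G`-equivariant and satisfies `Σ ∘ Σ = id`;
the real subspace `W = {v | Σ v = v}` is `G`-invariant, `V × V = W ⊕ iW` as real vector
spaces, and `W` is irreducible as a real representation of `G`. -/
theorem quaternionic_double_real_form
    {G V : Type*} [Group G] [AddCommGroup V] [Module ℂ V]
    [FiniteDimensional ℂ V] [Nontrivial V]
    (ρ : G →* (V ≃ₗ[ℂ] V))
    (hirr : ∀ p : Submodule ℂ V, (∀ g : G, ∀ x ∈ p, ρ g x ∈ p) → p = ⊥ ∨ p = ⊤)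
    (σ : V → V)
    (hadd : ∀ a b : V, σ (a + b) = σ a + σ b)
    (hsmul : ∀ (c : ℂ) (v : V), σ (c • v) = (starRingEnd ℂ) c • σ v)
    (hequiv : ∀ (g : G) (v : V), σ (ρ g v) = ρ g (σ v))
    (hbij : Function.Bijective σ)
    (hsq : ∀ v : V, σ (σ v) = -v) :
    (∀ a b : V × V, quaternionicDouble σ (a + b) =
        quaternionicDouble σ a + quaternionicDouble σ b) ∧
    (∀ (c : ℂ) (p : V × V), quaternionicDouble σ (c • p) =
        (starRingEnd ℂ) c • quaternionicDouble σ p) ∧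
    (∀ (g : G) (p : V × V), quaternionicDouble σ (ρ g p.1, ρ g p.2) =
        (ρ g (quaternionicDouble σ p).1, ρ g (quaternionicDouble σ p).2)) ∧
    (∀ p : V × V, quaternionicDouble σ (quaternionicDouble σ p) = p) ∧
    ∃ W : Submodule ℝ (V × V),
      (W : Set (V × V)) = {p : V × V | quaternionicDouble σ p = p} ∧
      (∀ g : G, ∀ p ∈ W, (ρ g p.1, ρ g p.2) ∈ W) ∧
      (∀ p : V × V, ∃! w : W × W, p = (w.1 : V × V) + Complex.I • (w.2 : V × V)) ∧
      (∀ t : Submodule ℝ (V × V), t ≤ W →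
        (∀ g : G, ∀ x ∈ t, (ρ g x.1, ρ g x.2) ∈ t) → t = ⊥ ∨ t = W) := by
  -- basic consequences
  have hσ0 : σ 0 = 0 := by
    have h := hadd 0 0
    rw [add_zero] at h
    exact left_eq_add.mp h
  have hσneg : ∀ v : V, σ (-v) = -σ v := by
    intro v
    have h := hadd (-v) v
    rw [neg_add_cancel, hσ0] at h
    exact eq_neg_of_add_eq_zero_left h.symm
  -- the four basic properties of Σ
  have hSigadd : ∀ a b : V × V, quaternionicDouble σ (a + b) =
      quaternionicDouble σ a + quaternionicDouble σ b := by
    intro a b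
    simp [quaternionicDouble, Prod.ext_iff, hadd, neg_add, add_comm]
  have hSigsmul : ∀ (c : ℂ) (p : V × V), quaternionicDouble σ (c • p) =
      (starRingEnd ℂ) c • quaternionicDouble σ p := by
    intro c p
    simp [quaternionicDouble, Prod.ext_iff, hsmul, smul_neg]
  have hSigequiv : ∀ (g : G) (p : V × V), quaternionicDouble σ (ρ g p.1, ρ g p.2) =
      (ρ g (quaternionicDouble σ p).1, ρ g (quaternionicDouble σ p).2) := by
    intro g p
    simp [quaternionicDouble, Prod.ext_iff, hequiv]
  have hSigsq : ∀ p : V × V, quaternionicDouble σ (quaternionicDouble σ p) = p := by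
    intro p
    simp [quaternionicDouble, Prod.ext_iff, hσneg, hsq]
  have hSigneg : ∀ p : V × V, quaternionicDouble σ (-p) = -quaternionicDouble σ p := by
    intro p
    simp [quaternionicDouble, Prod.ext_iff, hσneg]
  have hSigsub : ∀ a b : V × V, quaternionicDouble σ (a - b) =
      quaternionicDouble σ a - quaternionicDouble σ b := by
    intro a b
    rw [sub_eq_add_neg, hSigadd, hSigneg, sub_eq_add_neg]
  have hrC : ∀ (r : ℝ) (v : V × V), r • v = (r : ℂ) • v := fun r v =>
    Prod.ext (Complex.coe_smul r v.1).symm (Complex.coe_smul r v.2).symm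
  have hrCV : ∀ (r : ℝ) (v : V), r • v = (r : ℂ) • v := fun r v =>
    (Complex.coe_smul r v).symm
  -- the real form W
  set W : Submodule ℝ (V × V) :=
    { carrier := {p : V × V | quaternionicDouble σ p = p}
      add_mem' := by
        intro a b ha hb
        show quaternionicDouble σ (a + b) = a + b
        rw [hSigadd, ha, hb]
      zero_mem' := by
        show quaternionicDouble σ 0 = 0
        simp [quaternionicDouble, Prod.ext_iff, hσ0]
      smul_mem' := by
        intro r p hp
        have hp' : quaternionicDouble σ p = p := hp
        show quaternionicDouble σ (r • p) = r • p
        rw [hrC, hSigsmul, hp', Complex.conj_ofReal] } with hWdef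
  have hWmem : ∀ p : V × V, p ∈ W ↔ quaternionicDouble σ p = p := fun p => Iff.rfl
  have hWmem' : ∀ p : V × V, p ∈ W ↔ p.2 = -σ p.1 := by
    intro p
    rw [hWmem]
    constructor
    · intro hp
      have h2 := congrArg Prod.snd hp
      simpa [quaternionicDouble] using h2.symm
    · intro h
      have h1 : σ p.2 = p.1 := by rw [h, hσneg, hsq, neg_neg]
      show ((σ p.2, -σ p.1) : V × V) = p
      rw [h1, ← h]
  -- G-invariance of W
  have hWinv : ∀ g : G, ∀ p ∈ W, ((ρ g p.1, ρ g p.2) : V × V) ∈ W := by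
    intro g p hp
    have hp' : quaternionicDouble σ p = p := hp
    rw [hWmem, hSigequiv, hp']
  -- unique decomposition
  have huniqW : ∀ x₁ x₂ y₁ y₂ : V × V, x₁ ∈ W → x₂ ∈ W → y₁ ∈ W → y₂ ∈ W →
      x₁ + Complex.I • x₂ = y₁ + Complex.I • y₂ → x₁ = y₁ ∧ x₂ = y₂ := by
    intro x₁ x₂ y₁ y₂ h1 h2 h3 h4 heq
    have hd1 : (x₁ - y₁) + Complex.I • (x₂ - y₂) = 0 := by
      rw [smul_sub]
      rw [← sub_eq_zero] at heq
      rw [← heq]; abel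
    have hd2 : (x₁ - y₁) - Complex.I • (x₂ - y₂) = 0 := by
      have := congrArg (quaternionicDouble σ) hd1
      rw [hSigadd, hSigsmul, hSigsub, hSigsub, (hWmem _).mp h1, (hWmem _).mp h2,
        (hWmem _).mp h3, (hWmem _).mp h4, Complex.conj_I, neg_smul,
        ← sub_eq_add_neg] at this
      rw [this]
      show quaternionicDouble σ 0 = 0
      simp [quaternionicDouble, Prod.ext_iff, hσ0]
    have hx1 : x₁ - y₁ = 0 := by
      have hsum : (2 : ℂ) • (x₁ - y₁) = 0 := by
        have := congrArg₂ (· + ·) hd1 hd2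
        simp only [add_zero] at this
        rw [two_smul]
        calc (x₁ - y₁) + (x₁ - y₁)
            = ((x₁ - y₁) + Complex.I • (x₂ - y₂)) + ((x₁ - y₁) - Complex.I • (x₂ - y₂)) := by
              abel
          _ = 0 := by rw [hd1, hd2, add_zero]
      rcases smul_eq_zero.mp hsum with h | h
      · exact absurd h two_ne_zero
      · exact h
    refine ⟨sub_eq_zero.mp hx1, ?_⟩
    rw [hx1, zero_add] at hd1
    rcases smul_eq_zero.mp hd1 with h | h
    · exact absurd h Complex.I_ne_zero
    · exact sub_eq_zero.mp h
  have hdecomp : ∀ p : V × V, ∃! w : W × W,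
      p = (w.1 : V × V) + Complex.I • (w.2 : V × V) := by
    intro p
    set a : V × V := (2⁻¹ : ℂ) • (p + quaternionicDouble σ p) with hadef
    set b : V × V := (Complex.I / 2) • (quaternionicDouble σ p - p) with hbdef
    have haW : a ∈ W := by
      rw [hWmem, hadef, hSigsmul, hSigadd, hSigsq]
      rw [show (starRingEnd ℂ) (2⁻¹ : ℂ) = (2⁻¹ : ℂ) by norm_num [Complex.ext_iff]]
      rw [add_comm]
    have hbW : b ∈ W := by
      rw [hWmem, hbdef, hSigsmul, hSigsub, hSigsq]
      rw [show (starRingEnd ℂ) (Complex.I / 2) = -(Complex.I / 2) by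
        rw [map_div₀, Complex.conj_I, map_ofNat, neg_div]]
      rw [neg_smul, ← smul_neg, neg_sub]
    have hsumeq : p = a + Complex.I • b := by
      rw [hadef, hbdef]
      match_scalars <;> simp [Complex.ext_iff] <;> ring
    refine ⟨(⟨a, haW⟩, ⟨b, hbW⟩), hsumeq, ?_⟩
    rintro ⟨⟨x₁, hx₁⟩, ⟨x₂, hx₂⟩⟩ hx
    have := huniqW x₁ x₂ a b hx₁ hx₂ haW hbW (by rw [← hx, ← hsumeq])
    simp only [Prod.mk.injEq, Subtype.ext_iff]
    exact ⟨this.1, this.2⟩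
  refine ⟨hSigadd, hSigsmul, hSigequiv, hSigsq, W, rfl, hWinv, hdecomp, ?_⟩
  -- irreducibility
  intro t hle hinv
  -- the first-coordinate projection of t
  set s : Submodule ℝ V := t.map (LinearMap.fst ℝ V V) with hsdef
  have hsmem : ∀ x : V, x ∈ s ↔ ∃ p ∈ t, p.1 = x := by
    intro x
    simp [hsdef, Submodule.mem_map]
  have htmem : ∀ p : V × V, p ∈ t ↔ p.1 ∈ s ∧ p.2 = -σ p.1 := by
    intro p
    constructor
    · intro hp
      exact ⟨(hsmem p.1).mpr ⟨p, hp, rfl⟩, (hWmem' p).mp (hle hp)⟩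
    · rintro ⟨h1, h2⟩
      obtain ⟨q, hq, hq1⟩ := (hsmem p.1).mp h1
      have hq2 : q.2 = -σ q.1 := (hWmem' q).mp (hle hq)
      have hqp : q = p := Prod.ext hq1 (by rw [hq2, hq1, ← h2])
      rwa [← hqp]
  have hsinv : ∀ g : G, ∀ x ∈ s, ρ g x ∈ s := by
    intro g x hx
    obtain ⟨q, hq, hq1⟩ := (hsmem x).mp hx
    exact (hsmem _).mpr ⟨(ρ g q.1, ρ g q.2), hinv g q hq, by rw [hq1]⟩
  -- key scalar computations
  have key1 : ∀ (c : ℂ) (a b : V), c • (a + Complex.I • b) =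
      (c.re • a - c.im • b) + Complex.I • (c.im • a + c.re • b) := by
    intro c a b
    rw [hrCV c.re a, hrCV c.im b, hrCV c.im a, hrCV c.re b]
    match_scalars <;> simp [Complex.ext_iff]
  have key2 : ∀ (c : ℂ) (v : V), c • v = c.re • v + c.im • (Complex.I • v) := by
    intro c v
    rw [hrCV c.re v, hrCV c.im (Complex.I • v)]
    match_scalars
    simp [Complex.ext_iff]
  -- the complex span of s
  set sC : Submodule ℂ V :=
    { carrier := {v : V | ∃ a ∈ s, ∃ b ∈ s, v = a + Complex.I • b}
      add_mem' := by
        rintro x y ⟨a, ha, b, hb, rfl⟩ ⟨a', ha', b', hb', rfl⟩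
        exact ⟨a + a', s.add_mem ha ha', b + b', s.add_mem hb hb', by
          rw [smul_add]; abel⟩
      zero_mem' := ⟨0, s.zero_mem, 0, s.zero_mem, by simp⟩
      smul_mem' := by
        rintro c x ⟨a, ha, b, hb, rfl⟩
        exact ⟨c.re • a - c.im • b, s.sub_mem (s.smul_mem _ ha) (s.smul_mem _ hb),
          c.im • a + c.re • b, s.add_mem (s.smul_mem _ ha) (s.smul_mem _ hb),
          key1 c a b⟩ } with hsCdef
  have hsCinv : ∀ g : G, ∀ x ∈ sC, ρ g x ∈ sC := by
    rintro g x ⟨a, ha, b, hb, rfl⟩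
    exact ⟨ρ g a, hsinv g a ha, ρ g b, hsinv g b hb, by rw [map_add, map_smul]⟩
  rcases hirr sC hsCinv with hbot | htop
  · -- sC = ⊥ hence t = ⊥
    left
    rw [Submodule.eq_bot_iff]
    intro p hp
    obtain ⟨h1, h2⟩ := (htmem p).mp hp
    have hx : p.1 ∈ sC := ⟨p.1, h1, 0, s.zero_mem, by simp⟩
    rw [hbot, Submodule.mem_bot] at hx
    have h2' : p.2 = 0 := by rw [h2, hx, hσ0, neg_zero]
    exact Prod.ext hx h2'
  · -- sC = ⊤
    set sI : Submodule ℂ V :=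
      { carrier := {v : V | v ∈ s ∧ Complex.I • v ∈ s}
        add_mem' := by
          rintro x y ⟨hx1, hx2⟩ ⟨hy1, hy2⟩
          exact ⟨s.add_mem hx1 hy1, by rw [smul_add]; exact s.add_mem hx2 hy2⟩
        zero_mem' := ⟨s.zero_mem, by rw [smul_zero]; exact s.zero_mem⟩
        smul_mem' := by
          rintro c x ⟨hx1, hx2⟩
          have hII : Complex.I • (Complex.I • x) = -x := by
            rw [smul_smul, Complex.I_mul_I, neg_one_smul]
          constructor
          · rw [key2 c x]
            exact s.add_mem (s.smul_mem _ hx1) (s.smul_mem _ hx2)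
          · rw [smul_comm, key2 c (Complex.I • x), hII, smul_neg]
            exact s.add_mem (s.smul_mem _ hx2) (s.neg_mem (s.smul_mem _ hx1)) } with hsIdef
    have hsIinv : ∀ g : G, ∀ x ∈ sI, ρ g x ∈ sI := by
      rintro g x ⟨hx1, hx2⟩
      exact ⟨hsinv g x hx1, by rw [← map_smul]; exact hsinv g _ hx2⟩
    rcases hirr sI hsIinv with hIbot | hItop
    · -- sI = ⊥ : contradiction via a real structure
      exfalso
      have huni : ∀ a b a' b' : V, a ∈ s → b ∈ s → a' ∈ s → b' ∈ s →
          a + Complex.I • b = a' + Complex.I • b' → a = a' ∧ b = b' := by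
        intro a b a' b' ha hb ha' hb' heq
        have hd : a - a' = Complex.I • (b' - b) := by
          rw [smul_sub]
          rw [← sub_eq_zero] at heq
          rw [← sub_eq_zero, ← heq]; abel
        have hdI : Complex.I • (a - a') ∈ s := by
          rw [hd, smul_smul, Complex.I_mul_I, neg_one_smul, neg_sub]
          exact s.sub_mem hb hb'
        have hmem : a - a' ∈ sI := ⟨s.sub_mem ha ha', hdI⟩
        rw [hIbot, Submodule.mem_bot] at hmem
        have h1 : a = a' := sub_eq_zero.mp hmem
        rw [hmem] at hd
        rcases smul_eq_zero.mp hd.symm with h | h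
        · exact absurd h Complex.I_ne_zero
        · exact ⟨h1, (sub_eq_zero.mp h).symm⟩
      have hdec : ∀ v : V, ∃ a, a ∈ s ∧ ∃ b, b ∈ s ∧ v = a + Complex.I • b := by
        intro v
        have hv : v ∈ sC := htop ▸ Submodule.mem_top
        obtain ⟨a, ha, b, hb, hv'⟩ := hv
        exact ⟨a, ha, b, hb, hv'⟩
      choose aF haF bF hbF hvF using hdec
      set τ : V → V := fun v => aF v - Complex.I • bF v with hτ
      have habF : ∀ (v a b : V), a ∈ s → b ∈ s → v = a + Complex.I • b →
          aF v = a ∧ bF v = b := by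
        intro v a b ha hb hv
        exact huni _ _ _ _ (haF v) (hbF v) ha hb (by rw [← hvF v]; exact hv)
      have htadd : ∀ a b : V, τ (a + b) = τ a + τ b := by
        intro v w
        obtain ⟨h1, h2⟩ := habF (v + w) (aF v + aF w) (bF v + bF w)
          (s.add_mem (haF v) (haF w)) (s.add_mem (hbF v) (hbF w))
          (by conv_lhs => rw [hvF v, hvF w]
              rw [smul_add]; abel)
        show aF (v + w) - Complex.I • bF (v + w) =
          (aF v - Complex.I • bF v) + (aF w - Complex.I • bF w)
        rw [h1, h2, smul_add]; abel
      have htsmul : ∀ (c : ℂ) (v : V), τ (c • v) = (starRingEnd ℂ) c • τ v := by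
        intro c v
        obtain ⟨h1, h2⟩ := habF (c • v) (c.re • aF v - c.im • bF v)
          (c.im • aF v + c.re • bF v)
          (s.sub_mem (s.smul_mem _ (haF v)) (s.smul_mem _ (hbF v)))
          (s.add_mem (s.smul_mem _ (haF v)) (s.smul_mem _ (hbF v)))
          (by conv_lhs => rw [hvF v]
              exact key1 c (aF v) (bF v))
        show aF (c • v) - Complex.I • bF (c • v) =
          (starRingEnd ℂ) c • (aF v - Complex.I • bF v)
        rw [h1, h2, hrCV c.re (aF v), hrCV c.im (bF v), hrCV c.im (aF v), hrCV c.re (bF v)]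
        match_scalars <;> simp [Complex.ext_iff]
      have htequiv : ∀ (g : G) (v : V), τ (ρ g v) = ρ g (τ v) := by
        intro g v
        obtain ⟨h1, h2⟩ := habF (ρ g v) (ρ g (aF v)) (ρ g (bF v))
          (hsinv g _ (haF v)) (hsinv g _ (hbF v))
          (by conv_lhs => rw [hvF v]
              rw [map_add, map_smul])
        show aF (ρ g v) - Complex.I • bF (ρ g v) = ρ g (aF v - Complex.I • bF v)
        rw [h1, h2, map_sub, map_smul]
      have htsq : ∀ v : V, τ (τ v) = v := by
        intro v
        obtain ⟨h1, h2⟩ := habF (τ v) (aF v) (-bF v) (haF v) (s.neg_mem (hbF v))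
          (by show aF v - Complex.I • bF v = aF v + Complex.I • -bF v
              rw [smul_neg, sub_eq_add_neg])
        show aF (τ v) - Complex.I • bF (τ v) = v
        rw [h1, h2, smul_neg, sub_neg_eq_add, ← hvF v]
      exact qd_no_real_structure ρ hirr σ hadd hsmul hequiv hsq τ htadd htsmul htequiv htsq
    · -- sI = ⊤ : s = ⊤ hence t = W
      right
      refine le_antisymm hle ?_
      intro p hp
      refine (htmem p).mpr ⟨?_, (hWmem' p).mp hp⟩
      have hps : p.1 ∈ sI := hItop ▸ Submodule.mem_top
      exact hps.1
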